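/- arXiv:1904.11497 — 6 statements merged into one kernel-verified Lean document; each statement's English description precedes it below -/
import Mathlib

section
/- For two vectors u, v in the Euclidean plane ℝ², we have ‖u‖² + ‖v‖² + ‖u + v‖² ≥ 2√3 · √(‖u‖²‖v‖² − ⟨u, v⟩²). -/
theorem weitzenbock_vector (u v : EuclideanSpace ℝ (Fin 2)) :
    ‖u‖^2 + ‖v‖^2 + ‖u + v‖^2 ≥
      2 * Real.sqrt 3 * Real.sqrt (‖u‖^2 * ‖v‖^2 - (inner ℝ u v : ℝ)^2) := by
  set a := ‖u‖^2 with ha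
  set b := ‖v‖^2 with hb
  set c : ℝ := inner ℝ u v with hc
  have hadd : ‖u + v‖^2 = a + 2*c + b := by
    rw [ha, hb, hc, @norm_add_sq_real]
  have hpos : 0 ≤ a + b + c := by
    have h1 : (0:ℝ) ≤ ‖u + v‖^2 := sq_nonneg _
    nlinarith [sq_nonneg (‖u‖ - ‖v‖)]
  have key : 3 * (a * b - c^2) ≤ (a + b + c)^2 := by
    nlinarith [sq_nonneg (a - b), sq_nonneg (a + b + 4*c)]
  have h3 : Real.sqrt 3 * Real.sqrt (a * b - c^2) = Real.sqrt (3 * (a*b - c^2)) := by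
    rw [Real.sqrt_mul (by norm_num)]
  have h4 : Real.sqrt (3 * (a*b - c^2)) ≤ a + b + c := by
    calc Real.sqrt (3 * (a*b - c^2)) ≤ Real.sqrt ((a+b+c)^2) := Real.sqrt_le_sqrt key
      _ = a + b + c := Real.sqrt_sq hpos
  rw [hadd]
  nlinarith [h3, h4]
end

section
/- For two vectors u = (u₁, u₂), v = (v₁, v₂) in ℝ², with u ∧ v := u₁v₂ − u₂v₁, we have ‖u‖² + ‖v‖² + ‖u + v‖² ≥ 2√3 · (u ∧ v). -/
theorem weitzenbock_wedge (u v : EuclideanSpace ℝ (Fin 2)) :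
    ‖u‖^2 + ‖v‖^2 + ‖u + v‖^2 ≥ 2 * Real.sqrt 3 * (u 0 * v 1 - u 1 * v 0) := by
  have hn : ∀ w : EuclideanSpace ℝ (Fin 2), ‖w‖^2 = (w 0)^2 + (w 1)^2 := by
    intro w
    rw [EuclideanSpace.norm_eq, Real.sq_sqrt (by positivity)]
    simp [Fin.sum_univ_two, sq]
  have hadd : ∀ i, (u + v) i = u i + v i := fun i => rfl
  have hs : Real.sqrt 3 ^ 2 = 3 := Real.sq_sqrt (by norm_num)
  have hs0 : (0:ℝ) ≤ Real.sqrt 3 := Real.sqrt_nonneg 3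
  rw [hn u, hn v, hn (u+v), hadd 0, hadd 1]
  nlinarith [sq_nonneg (2*u 0 + v 0 - Real.sqrt 3 * v 1), sq_nonneg (2*u 1 + v 1 + Real.sqrt 3 * v 0), hs, hs0]
end

section
/- Let u, v ∈ ℝ² and let R be the rotation of the plane by angle π/3 (counterclockwise). Then ‖u‖² + ‖v‖² + ‖u + v‖² = 2√3 · (u ∧ v) + 2‖u + R(v)‖², where u ∧ v = u₁v₂ − u₂v₁. -/
lemma norm_sq_fin2 (x : EuclideanSpace ℝ (Fin 2)) : ‖x‖^2 = x 0 ^ 2 + x 1 ^ 2 := by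
  rw [EuclideanSpace.norm_eq, Real.sq_sqrt (by positivity)]
  simp [Fin.sum_univ_two, sq_abs]

theorem weitzenbock_identity (u v : EuclideanSpace ℝ (Fin 2))
    (R : EuclideanSpace ℝ (Fin 2) → EuclideanSpace ℝ (Fin 2))
    (hR : ∀ w : EuclideanSpace ℝ (Fin 2),
      R w = (WithLp.equiv 2 (Fin 2 → ℝ)).symm
        ![(1/2) * w 0 - (Real.sqrt 3 / 2) * w 1, (Real.sqrt 3 / 2) * w 0 + (1/2) * w 1]) :
    ‖u‖^2 + ‖v‖^2 + ‖u + v‖^2 =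
      2 * Real.sqrt 3 * (u 0 * v 1 - u 1 * v 0) + 2 * ‖u + R v‖^2 := by
  have hs : Real.sqrt 3 ^ 2 = 3 := Real.sq_sqrt (by norm_num)
  have h0 : R v 0 = (1/2) * v 0 - (Real.sqrt 3 / 2) * v 1 := by rw [hR]; rfl
  have h1 : R v 1 = (Real.sqrt 3 / 2) * v 0 + (1/2) * v 1 := by rw [hR]; rfl
  simp only [norm_sq_fin2, PiLp.add_apply, h0, h1]
  nlinarith [hs]
end

section
/- For u, v ∈ ℝ², equality ‖u‖² + ‖v‖² + ‖u + v‖² = 2√3 · (u ∧ v) holds if and only if u = −R(v), where R is rotation by π/3. -/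
set_option maxHeartbeats 1000000


theorem weitzenbock_eq_iff_rot (u v : EuclideanSpace ℝ (Fin 2))
    (R : EuclideanSpace ℝ (Fin 2) → EuclideanSpace ℝ (Fin 2))
    (hR : ∀ w : EuclideanSpace ℝ (Fin 2),
      R w = (WithLp.equiv 2 (Fin 2 → ℝ)).symm
        ![(1/2) * w 0 - (Real.sqrt 3 / 2) * w 1, (Real.sqrt 3 / 2) * w 0 + (1/2) * w 1]) :
    ‖u‖^2 + ‖v‖^2 + ‖u + v‖^2 = 2 * Real.sqrt 3 * (u 0 * v 1 - u 1 * v 0) ↔ u = -R v := by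
  have h3 : Real.sqrt 3 ^ 2 = 3 := Real.sq_sqrt (by norm_num)
  set s := Real.sqrt 3 with hs
  have hu : ‖u‖^2 = u 0 ^ 2 + u 1 ^ 2 := by
    rw [EuclideanSpace.norm_eq, Real.sq_sqrt (by positivity)]
    simp [Fin.sum_univ_two, sq, abs_mul_abs_self]
  have hv : ‖v‖^2 = v 0 ^ 2 + v 1 ^ 2 := by
    rw [EuclideanSpace.norm_eq, Real.sq_sqrt (by positivity)]
    simp [Fin.sum_univ_two, sq, abs_mul_abs_self]
  have huv : ‖u + v‖^2 = (u 0 + v 0) ^ 2 + (u 1 + v 1) ^ 2 := by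
    rw [EuclideanSpace.norm_eq, Real.sq_sqrt (by positivity)]
    simp [Fin.sum_univ_two, sq, abs_mul_abs_self]
  constructor
  · intro h
    rw [hu, hv, huv] at h
    have hsum : (u 0 + v 0 / 2 - s / 2 * v 1) ^ 2 + (u 1 + s / 2 * v 0 + v 1 / 2) ^ 2 = 0 := by
      nlinarith [h3, h]
    have h1 : (u 0 + v 0 / 2 - s / 2 * v 1) = 0 := by
      nlinarith [sq_nonneg (u 0 + v 0 / 2 - s / 2 * v 1), sq_nonneg (u 1 + s / 2 * v 0 + v 1 / 2)]
    have h2 : (u 1 + s / 2 * v 0 + v 1 / 2) = 0 := by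
      nlinarith [sq_nonneg (u 0 + v 0 / 2 - s / 2 * v 1), sq_nonneg (u 1 + s / 2 * v 0 + v 1 / 2)]
    ext i
    fin_cases i <;> simp [hR, ← hs] <;> linarith
  · intro h
    rw [hu, hv, huv]
    have h0 : u 0 = -(1/2 * v 0 - s / 2 * v 1) := by
      rw [h]
      simp only [hR, PiLp.neg_apply, WithLp.equiv_symm_apply, PiLp.toLp_apply, Matrix.cons_val_zero, ← hs]
    have h1 : u 1 = -(s / 2 * v 0 + 1/2 * v 1) := by
      rw [h]
      simp only [hR, PiLp.neg_apply, WithLp.equiv_symm_apply, PiLp.toLp_apply, Matrix.cons_val_one,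
        Matrix.head_cons, Matrix.cons_val_zero, ← hs]
    rw [h0, h1]; linear_combination (-(v 0 ^ 2 + v 1 ^ 2) / 2) * h3
end

section
/- For vectors u, v ∈ ℝ³ with ‖u‖ = 1, we have 2√3 · ‖u × v‖ ≤ 1 + ‖v‖² + ‖u − v‖², with equality if ‖v‖ = ‖u − v‖ = 1. -/
theorem aux_key (s t N : ℝ) (lag : N^2 = s - t^2) : 3*N^2 ≤ (1+s-t)^2 := by
  nlinarith [sq_nonneg (4*t - 1 - s), sq_nonneg (s - 1)]

theorem aux_fin (b N r : ℝ) (hN : 0 ≤ N) (hb : 0 ≤ b) (hr : 0 ≤ r)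
    (h3 : r^2 = 3) (key : 3*N^2 ≤ b^2) : 2*r*N ≤ 2*b := by
  nlinarith [sq_nonneg (r*N - b), mul_nonneg hr hN]

theorem aux_ts (s t N : ℝ) (lag : N^2 = s - t^2) : 0 ≤ 1 + s - t := by
  nlinarith [sq_nonneg N, sq_nonneg (1 - t)]

theorem cross_ineq (u v : EuclideanSpace ℝ (Fin 3)) (hu : ‖u‖ = 1)
    (cross : EuclideanSpace ℝ (Fin 3) → EuclideanSpace ℝ (Fin 3) → EuclideanSpace ℝ (Fin 3))
    (hcross : ∀ a b, cross a b = (WithLp.equiv 2 (Fin 3 → ℝ)).symm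
      ![a 1 * b 2 - a 2 * b 1, a 2 * b 0 - a 0 * b 2, a 0 * b 1 - a 1 * b 0]) :
    2 * Real.sqrt 3 * ‖cross u v‖ ≤ 1 + ‖v‖^2 + ‖u - v‖^2 ∧
    (‖v‖ = 1 → ‖u - v‖ = 1 → 2 * Real.sqrt 3 * ‖cross u v‖ = 1 + ‖v‖^2 + ‖u - v‖^2) := by
  have h3 : Real.sqrt 3 ^ 2 = 3 := Real.sq_sqrt (by norm_num)
  have h3n : (0:ℝ) ≤ Real.sqrt 3 := Real.sqrt_nonneg 3
  have normsq : ∀ x : EuclideanSpace ℝ (Fin 3), ‖x‖^2 = x 0^2 + x 1^2 + x 2^2 := by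
    intro x
    rw [EuclideanSpace.norm_eq, Real.sq_sqrt (by positivity)]
    simp [Fin.sum_univ_three]
  have hsub : ∀ i, (u - v) i = u i - v i := fun i => rfl
  have hc : ∀ i, cross u v i
      = ![u 1*v 2 - u 2*v 1, u 2*v 0 - u 0*v 2, u 0*v 1 - u 1*v 0] i := by
    intro i; rw [hcross]; rfl
  set N := ‖cross u v‖ with hNdef
  have hN : 0 ≤ N := norm_nonneg _
  have hN2 : N^2 = (u 1*v 2 - u 2*v 1)^2 + (u 2*v 0 - u 0*v 2)^2 + (u 0*v 1 - u 1*v 0)^2 := by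
    rw [hNdef, normsq (cross u v), hc 0, hc 1, hc 2]
    simp
  have hu1 : u 0^2 + u 1^2 + u 2^2 = 1 := by
    have h := normsq u
    rw [hu] at h
    nlinarith [h]
  have hvsq : ‖v‖^2 = v 0^2 + v 1^2 + v 2^2 := normsq v
  have huvsq : ‖u - v‖^2 = (u 0 - v 0)^2 + (u 1 - v 1)^2 + (u 2 - v 2)^2 := by
    rw [normsq (u - v), hsub 0, hsub 1, hsub 2]
  set s := v 0^2 + v 1^2 + v 2^2 with hsdef
  set t := u 0*v 0 + u 1*v 1 + u 2*v 2 with htdef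
  clear_value s t
  have lag : N^2 = s - t^2 := by
    rw [hsdef, htdef]
    linear_combination hN2 + (v 0^2 + v 1^2 + v 2^2) * hu1
  have rhs : 1 + ‖v‖^2 + ‖u - v‖^2 = 2*(1 + s - t) := by
    rw [hvsq, huvsq, hsdef, htdef]; linear_combination hu1
  have hb : 0 ≤ 1 + s - t := aux_ts s t N lag
  have key : 3 * N^2 ≤ (1 + s - t)^2 := aux_key s t N lag
  constructor
  · rw [rhs]
    exact aux_fin (1 + s - t) N (Real.sqrt 3) hN hb h3n h3 key
  · intro hv huv
    have hs1 : s = 1 := by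
      rw [← hvsq, hv]; norm_num
    have hsv : v 0^2 + v 1^2 + v 2^2 = 1 := by rw [← hsdef]; exact hs1
    have h1 : (u 0 - v 0)^2 + (u 1 - v 1)^2 + (u 2 - v 2)^2 = 1 := by
      rw [← huvsq, huv]; norm_num
    have ht : t = 1/2 := by
      linear_combination htdef + hu1/2 + hsv/2 - h1/2
    have hNsq : N^2 = 3/4 := by rw [lag, hs1, ht]; norm_num
    have hNval : N = Real.sqrt 3 / 2 := by
      have hz : (N - Real.sqrt 3 / 2) * (N + Real.sqrt 3 / 2) = 0 := by
        linear_combination hNsq - h3/4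
      rcases mul_eq_zero.1 hz with h | h
      · linarith
      · have : Real.sqrt 3 > 0 := Real.sqrt_pos.2 (by norm_num)
        linarith
    rw [rhs, hNval, hs1, ht]
    linear_combination h3
end

section
/- Let A, B, C be three points in the Euclidean plane ℝ² forming a triangle. Then dist(A,B)² + dist(B,C)² + dist(C,A)² ≥ 4√3 · |area(A,B,C)|, where area(A,B,C) = (1/2)·det(B − A, C − A). -/
set_option maxHeartbeats 1000000

private lemma weitzenbock_aux (a b c d : ℝ) :
    (a^2 + b^2) + ((a-c)^2 + (b-d)^2) + (c^2 + d^2) ≥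
      4 * Real.sqrt 3 * |(1/2 : ℝ) * (a*d - b*c)| := by
  have hs : Real.sqrt 3 ^ 2 = 3 := Real.sq_sqrt (by norm_num)
  have hSnn : (0:ℝ) ≤ a^2 + b^2 + c^2 + d^2 := by positivity
  have id1 : (a^2+b^2+c^2+d^2)^2 - (a*c+b*d + Real.sqrt 3*(a*d-b*c))^2
      = (a^2+b^2-c^2-d^2)^2 + (Real.sqrt 3*(a*c+b*d) - (a*d-b*c))^2 := by
    linear_combination (-((a*c+b*d)^2 + (a*d-b*c)^2)) * hs
  have id2 : (a^2+b^2+c^2+d^2)^2 - (a*c+b*d - Real.sqrt 3*(a*d-b*c))^2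
      = (a^2+b^2-c^2-d^2)^2 + (Real.sqrt 3*(a*c+b*d) + (a*d-b*c))^2 := by
    linear_combination (-((a*c+b*d)^2 + (a*d-b*c)^2)) * hs
  have hx1 : (a*c+b*d + Real.sqrt 3*(a*d-b*c))^2 ≤ (a^2+b^2+c^2+d^2)^2 := by
    linarith [id1, sq_nonneg (a^2+b^2-c^2-d^2), sq_nonneg (Real.sqrt 3*(a*c+b*d) - (a*d-b*c))]
  have hx2 : (a*c+b*d - Real.sqrt 3*(a*d-b*c))^2 ≤ (a^2+b^2+c^2+d^2)^2 := by
    linarith [id2, sq_nonneg (a^2+b^2-c^2-d^2), sq_nonneg (Real.sqrt 3*(a*c+b*d) + (a*d-b*c))]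
  have key : ∀ x : ℝ, x^2 ≤ (a^2+b^2+c^2+d^2)^2 → x ≤ a^2+b^2+c^2+d^2 := by
    intro x hx
    have h' : Real.sqrt (x^2) ≤ Real.sqrt ((a^2+b^2+c^2+d^2)^2) := Real.sqrt_le_sqrt hx
    rw [Real.sqrt_sq_eq_abs, Real.sqrt_sq hSnn] at h'
    exact le_trans (le_abs_self x) h'
  have key1 := key _ hx1
  have key2 := key _ hx2
  rcases abs_cases ((1/2 : ℝ) * (a * d - b * c)) with ⟨h, _⟩ | ⟨h, _⟩ <;> rw [h]
  · nlinarith [key1]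
  · nlinarith [key2]

theorem weitzenbock_points (A B C : EuclideanSpace ℝ (Fin 2)) :
    dist A B ^ 2 + dist B C ^ 2 + dist C A ^ 2 ≥
      4 * Real.sqrt 3 *
        |(1/2) * ((B - A) 0 * (C - A) 1 - (B - A) 1 * (C - A) 0)| := by
  have hd : ∀ X Y : EuclideanSpace ℝ (Fin 2),
      dist X Y ^ 2 = (X 0 - Y 0)^2 + (X 1 - Y 1)^2 := by
    intro X Y
    rw [EuclideanSpace.dist_eq, Real.sq_sqrt (by positivity)]
    simp [Fin.sum_univ_two, Real.dist_eq, sq_abs]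
  rw [hd, hd, hd]
  have h0 : (B - A) 0 = B 0 - A 0 := rfl
  have h1 : (B - A) 1 = B 1 - A 1 := rfl
  have h2 : (C - A) 0 = C 0 - A 0 := rfl
  have h3 : (C - A) 1 = C 1 - A 1 := rfl
  rw [h0, h1, h2, h3]
  have := weitzenbock_aux (B 0 - A 0) (B 1 - A 1) (C 0 - A 0) (C 1 - A 1)
  have e1 : (A 0 - B 0)^2 = (B 0 - A 0)^2 := by ring
  have e2 : (A 1 - B 1)^2 = (B 1 - A 1)^2 := by ring
  have e3 : (B 0 - C 0)^2 = ((B 0 - A 0) - (C 0 - A 0))^2 := by ring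
  have e4 : (B 1 - C 1)^2 = ((B 1 - A 1) - (C 1 - A 1))^2 := by ring
  rw [e1, e2, e3, e4]
  linarith [this]
end
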